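/- For d ≥ 2 and i = 1, the coefficient of a_{d-1}^d in the resultant R_1 = Res(f, H_1(f)) ∈ Z[a_1,...,a_{d-1}] equals (-1)^{d-1}(d-1)^{d-1}. -/

import Mathlib

open Polynomial

/-- The Sylvester matrix of `f` (regarded as having degree `m`) and `g`
(regarded as having degree `n`). -/
def sylvester {R : Type*} [CommRing R] (f g : Polynomial R) (m n : ℕ) :
    Matrix (Fin (m + n)) (Fin (m + n)) R :=
  Matrix.of fun i j =>
    if (i : ℕ) < n then
      (if (i : ℕ) ≤ j ∧ (j : ℕ) ≤ (i : ℕ) + m then f.coeff (m + i - j) else 0)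
    else
      (if (i : ℕ) - n ≤ j ∧ (j : ℕ) ≤ ((i : ℕ) - n) + n then g.coeff (n + ((i : ℕ) - n) - j) else 0)

/-- The resultant of `f` and `g`, regarded as polynomials of degrees `m` and `n`. -/
def res {R : Type*} [CommRing R] (f g : Polynomial R) (m n : ℕ) : R :=
  (_root_.sylvester f g m n).det

/-- The generic monic polynomial `x^d + a_1 x^{d-1} + ⋯ + a_{d-1} x` with zero constant
term over `ℤ[a_1, …, a_{d-1}]`, where `MvPolynomial.X j` plays the role of `a_j`. -/
noncomputable def genF (d : ℕ) : Polynomial (MvPolynomial ℕ ℤ) :=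
  X ^ d + ∑ j ∈ Finset.Icc 1 (d - 1), C (MvPolynomial.X j) * X ^ (d - j)

/-- `R_i = Res(f, H_i(f))`, the resultant of the generic polynomial and its `i`-th Hasse
derivative, regarded as polynomials of degrees `d` and `d - i`. -/
noncomputable def Rres (d i : ℕ) : MvPolynomial ℕ ℤ :=
  res (genF d) (Polynomial.hasseDeriv i (genF d)) d (d - i)

/-! ### Auxiliary machinery -/

/-- Specialization sending `a_{d-1}` to `X` and all other variables to `0`. -/
noncomputable def phiD (d : ℕ) : MvPolynomial ℕ ℤ →+* Polynomial ℤ :=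
  (MvPolynomial.aeval fun j => if j = d - 1 then (X : Polynomial ℤ) else 0).toRingHom

lemma coeff_phiD (d : ℕ) (P : MvPolynomial ℕ ℤ) :
    (phiD d P).coeff d = MvPolynomial.coeff (Finsupp.single (d - 1) d) P := by
  conv_lhs => rw [P.as_sum]
  rw [map_sum, finset_sum_coeff]
  conv_rhs => rw [P.as_sum, MvPolynomial.coeff_sum]
  refine Finset.sum_congr rfl fun v hv => ?_
  rw [MvPolynomial.coeff_monomial]
  show ((MvPolynomial.aeval fun j => if j = d - 1 then (X : Polynomial ℤ) else 0)
      (MvPolynomial.monomial v (MvPolynomial.coeff v P))).coeff d = _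
  rw [MvPolynomial.aeval_monomial]
  by_cases hsupp : v.support ⊆ {d - 1}
  · obtain ⟨k, rfl⟩ := Finsupp.support_subset_singleton'.mp hsupp
    rw [Finsupp.prod_single_index (by simp)]
    rw [if_pos rfl]
    rw [Polynomial.algebraMap_apply, Algebra.algebraMap_self, RingHom.id_apply, coeff_C_mul, coeff_X_pow]
    by_cases hk : k = d
    · simp [hk]
    · rw [if_neg fun h => hk h.symm, if_neg fun h => hk ((Finsupp.single_injective _ h)),
        mul_zero]
  · obtain ⟨j, hj, hjne⟩ : ∃ j ∈ v.support, j ≠ d - 1 := by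
      by_contra h; push_neg at h
      exact hsupp fun x hx => Finset.mem_singleton.mpr (h x hx)
    have h0 : v.prod (fun n e => (if n = d - 1 then (X : Polynomial ℤ) else 0) ^ e) = 0 := by
      rw [Finsupp.prod]
      apply Finset.prod_eq_zero hj
      rw [if_neg hjne, zero_pow (Finsupp.mem_support_iff.mp hj)]
    rw [h0, mul_zero, coeff_zero]
    rw [if_neg]
    rintro rfl
    have := Finsupp.support_single_subset hj
    simp at this; exact hjne this

lemma sylvester_map {R S : Type*} [CommRing R] [CommRing S] (ψ : R →+* S)
    (f g : Polynomial R) (m n : ℕ) :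
    (_root_.sylvester f g m n).map ψ = _root_.sylvester (f.map ψ) (g.map ψ) m n := by
  ext i j
  simp only [_root_.sylvester, Matrix.map_apply, Matrix.of_apply]
  split_ifs <;> simp [coeff_map]

lemma genF_map (d : ℕ) (hd : 2 ≤ d) :
    (genF d).map (phiD d) = X ^ d + C X * X := by
  rw [genF, Polynomial.map_add, Polynomial.map_pow, map_X, Polynomial.map_sum]
  congr 1
  rw [Finset.sum_eq_single (d - 1)]
  · rw [Polynomial.map_mul, map_C, Polynomial.map_pow, map_X]
    have h1 : d - (d - 1) = 1 := by omega
    rw [h1, pow_one]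
    congr 1
    show C (phiD d (MvPolynomial.X (d - 1))) = C X
    rw [phiD]
    simp
  · intro j hj hne
    rw [Polynomial.map_mul, map_C]
    have : phiD d (MvPolynomial.X j) = 0 := by
      rw [phiD]; simp [hne]
    rw [this, map_zero, zero_mul]
  · intro h
    exact absurd (Finset.mem_Icc.mpr ⟨by omega, le_refl _⟩) h

lemma det_spec (m : ℕ) (hm : 1 ≤ m) :
    res (X ^ (m + 1) + C X * X)
        (C ((m : Polynomial ℤ) + 1) * X ^ m + C X) (m + 1) m
      = (C (-(m : ℤ)) * X) ^ m * X := by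
  set f₀ : Polynomial (Polynomial ℤ) := X ^ (m + 1) + C X * X with hf₀
  set g₀ : Polynomial (Polynomial ℤ) := C ((m : Polynomial ℤ) + 1) * X ^ m + C X with hg₀
  have hf : ∀ k, f₀.coeff k = if k = m + 1 then 1 else if k = 1 then X else 0 := by
    intro k
    rw [hf₀, coeff_add, coeff_X_pow, coeff_C_mul, coeff_X]
    split_ifs <;> first | (exfalso; omega) | ring
  have hg : ∀ k, g₀.coeff k = if k = m then ((m : Polynomial ℤ) + 1)
      else if k = 0 then X else 0 := by
    intro k
    rw [hg₀, coeff_add, coeff_C_mul, coeff_X_pow, coeff_C]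
    split_ifs <;> first | (exfalso; omega) | ring
  set E : Fin m ⊕ Fin (m + 1) ≃ Fin ((m + 1) + m) :=
    finSumFinEquiv.trans (finCongr (by omega)) with hE
  have hEl : ∀ a : Fin m, ((E (Sum.inl a) : ℕ)) = (a : ℕ) := by
    intro a; simp [hE]
  have hEr : ∀ b : Fin (m + 1), ((E (Sum.inr b) : ℕ)) = m + (b : ℕ) := by
    intro b; simp [hE]; omega
  set B : Matrix (Fin m) (Fin (m + 1)) (Polynomial ℤ) :=
    Matrix.of fun a b => if (b : ℕ) = (a : ℕ) then (X : Polynomial ℤ) else 0 with hB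
  set Cm : Matrix (Fin (m + 1)) (Fin m) (Polynomial ℤ) :=
    Matrix.of fun b a => if (b : ℕ) = (a : ℕ) then ((m : Polynomial ℤ) + 1) else 0 with hCm
  set D : Matrix (Fin (m + 1)) (Fin (m + 1)) (Polynomial ℤ) :=
    Matrix.of fun b b' => if (b' : ℕ) = (b : ℕ) then (X : Polynomial ℤ)
      else if (b : ℕ) = m ∧ (b' : ℕ) = 0 then ((m : Polynomial ℤ) + 1) else 0 with hD
  have key : (_root_.sylvester f₀ g₀ (m + 1) m).submatrix E E = Matrix.fromBlocks 1 B Cm D := by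
    ext i j
    cases i with
    | inl a =>
      cases j with
      | inl a' =>
        have ha := a.isLt; have ha' := a'.isLt
        simp only [Matrix.submatrix_apply, _root_.sylvester, Matrix.of_apply, hEl,
          Matrix.fromBlocks_apply₁₁, Matrix.one_apply, hf, Fin.ext_iff]
        split_ifs <;> first | rfl | omega
      | inr b =>
        have ha := a.isLt; have hb := b.isLt
        simp only [Matrix.submatrix_apply, _root_.sylvester, Matrix.of_apply, hEl, hEr,
          Matrix.fromBlocks_apply₁₂, hB, hf]
        split_ifs <;> first | rfl | omega
    | inr b =>
      cases j with
      | inl a' =>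
        have hb := b.isLt; have ha' := a'.isLt
        simp only [Matrix.submatrix_apply, _root_.sylvester, Matrix.of_apply, hEl, hEr,
          Matrix.fromBlocks_apply₂₁, hCm, hg]
        split_ifs <;> first | rfl | omega
      | inr b' =>
        have hb := b.isLt; have hb' := b'.isLt
        simp only [Matrix.submatrix_apply, _root_.sylvester, Matrix.of_apply, hEr,
          Matrix.fromBlocks_apply₂₂, hD, hg]
        split_ifs <;> first | rfl | omega
  have step1 : res f₀ g₀ (m + 1) m = (D - Cm * B).det := by
    rw [res, ← Matrix.det_submatrix_equiv_self E, key, Matrix.det_fromBlocks_one₁₁]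
  set T : Matrix (Fin (m + 1)) (Fin (m + 1)) (Polynomial ℤ) :=
    Matrix.of fun b b' => if (b' : ℕ) = (b : ℕ) then
        (if (b : ℕ) = m then (X : Polynomial ℤ) else X - ((m : Polynomial ℤ) + 1) * X)
      else if (b : ℕ) = m ∧ (b' : ℕ) = 0 then ((m : Polynomial ℤ) + 1) else 0 with hT
  have hDT : D - Cm * B = T := by
    ext b b'
    have hb := b.isLt; have hb' := b'.isLt
    simp only [Matrix.sub_apply, Matrix.mul_apply, hB, hCm, hD, hT, Matrix.of_apply]
    by_cases hbm : (b : ℕ) < m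
    · rw [Finset.sum_eq_single (⟨(b : ℕ), hbm⟩ : Fin m)]
      · simp only [if_pos rfl]
        split_ifs <;> first | (exfalso; omega) | ring
      · intro a _ hne
        rw [if_neg, zero_mul]
        intro h; exact hne (Fin.ext h.symm)
      · intro h; exact absurd (Finset.mem_univ _) h
    · rw [Finset.sum_eq_zero, sub_zero]
      · split_ifs <;> first | (exfalso; omega) | rfl
      · intro a _
        rw [if_neg, zero_mul]
        have := a.isLt; omega
  have htri : T.BlockTriangular OrderDual.toDual := by
    intro i j hij
    have : (i : ℕ) < (j : ℕ) := hij
    simp only [hT, Matrix.of_apply]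
    have hj := j.isLt
    split_ifs <;> first | rfl | omega
  rw [step1, hDT, Matrix.det_of_lowerTriangular T htri]
  have hdiag : ∀ b : Fin (m + 1), T b b = if (b : ℕ) = m then (X : Polynomial ℤ)
      else X - ((m : Polynomial ℤ) + 1) * X := by
    intro b; simp [hT]
  simp only [hdiag]
  rw [Fin.prod_univ_castSucc]
  have h1 : ∀ a : Fin m, (if ((Fin.castSucc a : Fin (m + 1)) : ℕ) = m then (X : Polynomial ℤ)
      else X - ((m : Polynomial ℤ) + 1) * X) = X - ((m : Polynomial ℤ) + 1) * X := by
    intro a; rw [if_neg]; have := a.isLt; simp; omega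
  have hlast : (if ((Fin.last m : Fin (m + 1)) : ℕ) = m then (X : Polynomial ℤ)
      else X - ((m : Polynomial ℤ) + 1) * X) = X := by
    simp
  have hc : (C (-(m : ℤ)) : Polynomial ℤ) = -(m : Polynomial ℤ) := by simp
  simp only [h1, hlast, Finset.prod_const, Finset.card_univ, Fintype.card_fin]
  rw [hc]; ring

/-- The coefficient of `a_{d-1}^d` in `R_1 = Res(f, H_1(f))` is `(-1)^{d-1} (d-1)^{d-1}`. -/
theorem coeff_pure_power_resultant_first (d : ℕ) (hd : 2 ≤ d) :
    MvPolynomial.coeff (Finsupp.single (d - 1) d) (Rres d 1) =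
      (-1) ^ (d - 1) * ((d : ℤ) - 1) ^ (d - 1) := by
  obtain ⟨m, rfl⟩ : ∃ m, d = m + 1 := ⟨d - 1, by omega⟩
  have hm : 1 ≤ m := by omega
  rw [← coeff_phiD]
  have hgen : (genF (m + 1)).map (phiD (m + 1)) = X ^ (m + 1) + C X * X :=
    genF_map _ hd
  have hder : (hasseDeriv 1 (genF (m + 1))).map (phiD (m + 1))
      = C ((m : Polynomial ℤ) + 1) * X ^ m + C X := by
    rw [hasseDeriv_one, ← derivative_map, hgen, derivative_add, derivative_X_pow,
      derivative_C_mul, derivative_X, mul_one]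
    simp only [Nat.add_sub_cancel, Nat.cast_add, Nat.cast_one]
  have hres : phiD (m + 1) (Rres (m + 1) 1) =
      res (X ^ (m + 1) + C X * X) (C ((m : Polynomial ℤ) + 1) * X ^ m + C X) (m + 1) m := by
    rw [Rres, Nat.add_sub_cancel, res, res, ← hgen, ← hder, ← sylvester_map, RingHom.map_det, RingHom.mapMatrix_apply]
  rw [hres, det_spec m hm, mul_pow, ← C_pow, mul_assoc, ← pow_succ, coeff_C_mul,
    coeff_X_pow, if_pos rfl, mul_one]
  have h2 : m + 1 - 1 = m := by omega
  rw [h2]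
  push_cast
  rw [neg_pow]
  ring
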